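/- arXiv:1803.02624 — 2 statements merged into one kernel-verified Lean document; each statement's English description precedes it below -/
import Mathlib

section
/- Let P be a transition matrix on a finite state space Ω satisfying the lumpability condition with respect to an equivalence relation ∼, let π be a probability distribution on Ω with pushforward π̄ on Ω̄, and let ε > 0, T ∈ ℕ. If for every x ∈ Ω and every t > T one has d_V(𝟙_x P^t, π) ≤ ε, then for every equivalence class C ∈ Ω̄ and every t > T one has d_V(𝟙_C P̄^t, π̄) ≤ ε. (In other words, the mixing time of the projected chain is at most the mixing time of the original chain: τ(ε) ≥ τ̄(ε).) -/
open Finset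

noncomputable section

variable {Ω : Type*}

/-- The sum of `μ` over the equivalence class `C` of the setoid `s`. -/
def Pushforward (s : Setoid Ω) [Fintype Ω] [DecidableEq (Quotient s)]
    (μ : Ω → ℝ) (C : Quotient s) : ℝ :=
  ∑ z ∈ Finset.univ.filter (fun z => Quotient.mk s z = C), μ z

/-- The lumpability condition. -/
def IsLumpable (s : Setoid Ω) [Fintype Ω] [DecidableEq (Quotient s)]
    (P : Ω → Ω → ℝ) : Prop :=
  ∀ x x' : Ω, s.r x x' → ∀ C : Quotient s,
    Pushforward s (P x) C = Pushforward s (P x') C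

/-- The projected (lumped) transition matrix on the quotient. -/
def Proj (s : Setoid Ω) [Fintype Ω] [DecidableEq (Quotient s)]
    (P : Ω → Ω → ℝ) (C D : Quotient s) : ℝ :=
  Pushforward s (P C.out) D

/-- One step of the Markov chain: `(μP)(y) = ∑ x, μ x * P x y`. -/
def Step {S : Type*} [Fintype S] (P : S → S → ℝ) (μ : S → ℝ) : S → ℝ :=
  fun y => ∑ x, μ x * P x y

/-- The one-point distribution at `x`. -/
def onePoint {S : Type*} [DecidableEq S] (x : S) : S → ℝ :=
  fun y => if y = x then 1 else 0

/-- Total variation distance between two distributions on a finite set. -/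
def dV {S : Type*} [Fintype S] (μ ν : S → ℝ) : ℝ :=
  (1 / 2) * ∑ x, |μ x - ν x|

lemma sum_fibers (s : Setoid Ω) [Fintype Ω] [DecidableEq (Quotient s)]
    [Fintype (Quotient s)] (f : Ω → ℝ) :
    ∑ C : Quotient s, ∑ z ∈ Finset.univ.filter (fun z => Quotient.mk s z = C), f z
      = ∑ z, f z := by
  rw [Finset.sum_fiberwise_eq_sum_filter,
    Finset.filter_true_of_mem (fun _ _ => Finset.mem_univ _)]

lemma push_step (s : Setoid Ω) [Fintype Ω] [DecidableEq (Quotient s)]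
    [Fintype (Quotient s)] (P : Ω → Ω → ℝ) (hlump : IsLumpable s P) (μ : Ω → ℝ) :
    Pushforward s (Step P μ) = Step (Proj s P) (Pushforward s μ) := by
  funext D
  unfold Pushforward Step Proj
  rw [Finset.sum_comm]
  simp_rw [← Finset.mul_sum]
  show (∑ x, μ x * Pushforward s (P x) D) = _
  rw [← sum_fibers s (fun x => μ x * Pushforward s (P x) D)]
  refine Finset.sum_congr rfl fun C _ => ?_
  rw [Finset.sum_mul]
  refine Finset.sum_congr rfl fun x hx => ?_
  simp only [Finset.mem_filter] at hx
  congr 1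
  exact hlump _ _ (Quotient.exact (by rw [hx.2]; exact (Quotient.out_eq C).symm)) D

lemma push_onePoint (s : Setoid Ω) [Fintype Ω] [DecidableEq Ω]
    [DecidableEq (Quotient s)] (C : Quotient s) :
    Pushforward s (onePoint C.out) = onePoint C := by
  funext D
  unfold Pushforward onePoint
  rw [Finset.sum_ite_eq' (Finset.univ.filter (fun z => Quotient.mk s z = D)) C.out (fun _ => (1:ℝ))]
  by_cases h : D = C
  · subst h
    simp [Quotient.out_eq]
  · simp only [Finset.mem_filter, Finset.mem_univ, true_and]
    rw [if_neg, if_neg h]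
    rw [Quotient.out_eq]
    exact fun hc => h hc.symm

lemma dV_push_le (s : Setoid Ω) [Fintype Ω] [DecidableEq (Quotient s)]
    [Fintype (Quotient s)] (μ ν : Ω → ℝ) :
    dV (Pushforward s μ) (Pushforward s ν) ≤ dV μ ν := by
  unfold dV Pushforward
  have h : ∀ C : Quotient s,
      |∑ z ∈ Finset.univ.filter (fun z => Quotient.mk s z = C), μ z -
        ∑ z ∈ Finset.univ.filter (fun z => Quotient.mk s z = C), ν z|
      ≤ ∑ z ∈ Finset.univ.filter (fun z => Quotient.mk s z = C), |μ z - ν z| := by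
    intro C
    rw [← Finset.sum_sub_distrib]
    exact Finset.abs_sum_le_sum_abs _ _
  have h3 : ∑ C : Quotient s,
      |∑ z ∈ Finset.univ.filter (fun z => Quotient.mk s z = C), μ z -
        ∑ z ∈ Finset.univ.filter (fun z => Quotient.mk s z = C), ν z|
      ≤ ∑ z, |μ z - ν z| := by
    rw [← sum_fibers s (fun z => |μ z - ν z|)]
    exact Finset.sum_le_sum (fun C _ => h C)
  exact mul_le_mul_of_nonneg_left h3 (by norm_num)

/-- the mixing time of the projected chain is at most the mixing time of
the original chain: if after time `T` the original chain is within `ε` of `π` from every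
starting state, then after time `T` the projected chain is within `ε` of the pushforward
of `π` from every starting class. -/
theorem mixing_time_proj_le
    [Fintype Ω] [DecidableEq Ω] (s : Setoid Ω) [DecidableEq (Quotient s)]
    [Fintype (Quotient s)]
    (P : Ω → Ω → ℝ)
    (hP0 : ∀ x y, 0 ≤ P x y) (hP1 : ∀ x, ∑ y, P x y = 1)
    (hlump : IsLumpable s P)
    (π : Ω → ℝ) (hπ0 : ∀ x, 0 ≤ π x) (hπ1 : ∑ x, π x = 1)
    (ε : ℝ) (hε : 0 < ε) (T : ℕ)
    (hmix : ∀ (x : Ω) (t : ℕ), T < t → dV ((Step P)^[t] (onePoint x)) π ≤ ε) :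
    ∀ (C : Quotient s) (t : ℕ), T < t →
      dV ((Step (Proj s P))^[t] (onePoint C)) (Pushforward s π) ≤ ε := by
  intro C t ht
  have key : ∀ n : ℕ, (Step (Proj s P))^[n] (onePoint C)
      = Pushforward s ((Step P)^[n] (onePoint C.out)) := by
    intro n
    induction n with
    | zero => simp [push_onePoint s C]
    | succ n ih =>
      rw [Function.iterate_succ_apply', Function.iterate_succ_apply', ih,
        push_step s P hlump]
  rw [key t]
  exact le_trans (dV_push_le s _ π) (hmix C.out t ht)
end
end

section
/- Let P be a symmetric transition matrix on a nonempty finite state space Ω satisfying the lumpability condition with respect to an equivalence relation ∼; let π be the uniform distribution on Ω and π̄ its pushforward on the quotient Ω̄. For x ∈ Ω let 𝟙̄_x be the distribution uniform on the class [x] and zero elsewhere. Then for every ε > 0 and T ∈ ℕ: (for all x ∈ Ω and all t > T, d_V(𝟙̄_x P^t, π) ≤ ε) if and only if (for all classes C ∈ Ω̄ and all t > T, d_V(𝟙_C P̄^t, π̄) ≤ ε). In other words, the mixing time of the chain started from the uniform distribution on an equivalence class equals the mixing time of the projected chain: τ̂(ε) = τ̄(ε). -/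
open Finset

noncomputable section

variable {Ω : Type*}

/-- The size of the equivalence class of `x`. -/
def classCard (s : Setoid Ω) [Fintype Ω] [DecidableEq (Quotient s)] (x : Ω) : ℕ :=
  (Finset.univ.filter (fun z => Quotient.mk s z = Quotient.mk s x)).card

/-- The distribution that is uniform on the class of `x` and zero elsewhere. -/
def classUniform (s : Setoid Ω) [Fintype Ω] [DecidableEq (Quotient s)] (x : Ω) : Ω → ℝ :=
  fun y =>
    if Quotient.mk s y = Quotient.mk s x then 1 / (classCard s x : ℝ) else 0

/-- The uniform distribution on a finite set. -/
def uniformDist (S : Type*) [Fintype S] : S → ℝ :=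
  fun _ => 1 / (Fintype.card S : ℝ)

section Aux

variable [Fintype Ω] (s : Setoid Ω) [DecidableEq (Quotient s)] [Fintype (Quotient s)]

set_option linter.unusedSectionVars false

/-- A function constant on equivalence classes. -/
def ClassConst (μ : Ω → ℝ) : Prop :=
  ∀ x y : Ω, Quotient.mk s x = Quotient.mk s y → μ x = μ y

lemma mem_fiber_out {z : Ω} {C : Quotient s}
    (hz : z ∈ Finset.univ.filter (fun z => Quotient.mk s z = C)) :
    Quotient.mk s z = Quotient.mk s C.out := by
  rw [Finset.mem_filter] at hz
  exact hz.2.trans (Quotient.out_eq C).symm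

lemma pushforward_classConst (μ : Ω → ℝ) (h : ClassConst s μ) (C : Quotient s) :
    Pushforward s μ C
      = ((Finset.univ.filter (fun z => Quotient.mk s z = C)).card : ℝ) * μ C.out := by
  unfold Pushforward
  have h1 : ∑ z ∈ Finset.univ.filter (fun z => Quotient.mk s z = C), μ z
      = ∑ _z ∈ Finset.univ.filter (fun z => Quotient.mk s z = C), μ C.out :=
    Finset.sum_congr rfl fun z hz => h z C.out (mem_fiber_out s hz)
  rw [h1, Finset.sum_const, nsmul_eq_mul]

lemma dV_pushforward (μ ν : Ω → ℝ)
    (hμ : ClassConst s μ) (hν : ClassConst s ν) :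
    dV (Pushforward s μ) (Pushforward s ν) = dV μ ν := by
  unfold dV
  congr 1
  rw [← Finset.sum_fiberwise Finset.univ (fun x => Quotient.mk s x)
    (fun x => |μ x - ν x|)]
  refine Finset.sum_congr rfl fun C _ => ?_
  rw [pushforward_classConst s μ hμ C, pushforward_classConst s ν hν C,
    ← mul_sub, abs_mul, Nat.abs_cast]
  have h1 : ∑ z ∈ Finset.univ.filter (fun z => Quotient.mk s z = C), |μ z - ν z|
      = ∑ _z ∈ Finset.univ.filter (fun z => Quotient.mk s z = C), |μ C.out - ν C.out| :=
    Finset.sum_congr rfl fun z hz => by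
      rw [hμ z C.out (mem_fiber_out s hz), hν z C.out (mem_fiber_out s hz)]
  rw [h1, Finset.sum_const, nsmul_eq_mul]

variable (P : Ω → Ω → ℝ)

lemma pushforward_step (hlump : IsLumpable s P) (μ : Ω → ℝ) (C : Quotient s) :
    Pushforward s (Step P μ) C = Step (Proj s P) (Pushforward s μ) C := by
  have h1 : Pushforward s (Step P μ) C = ∑ x, μ x * Pushforward s (P x) C := by
    unfold Pushforward Step
    rw [Finset.sum_comm]
    exact Finset.sum_congr rfl fun x _ => (Finset.mul_sum _ _ _).symm
  rw [h1, ← Finset.sum_fiberwise Finset.univ (fun x => Quotient.mk s x)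
    (fun x => μ x * Pushforward s (P x) C)]
  unfold Step
  refine Finset.sum_congr rfl fun D _ => ?_
  have h2 : ∑ x ∈ Finset.univ.filter (fun x => Quotient.mk s x = D),
        μ x * Pushforward s (P x) C
      = ∑ x ∈ Finset.univ.filter (fun x => Quotient.mk s x = D),
        μ x * Pushforward s (P D.out) C :=
    Finset.sum_congr rfl fun x hx => by
      rw [hlump x D.out (Quotient.exact (mem_fiber_out s hx)) C]
  rw [h2, ← Finset.sum_mul]
  rfl

lemma step_classConst (hsym : ∀ x y, P x y = P y x) (hlump : IsLumpable s P)
    (μ : Ω → ℝ) (hμ : ClassConst s μ) : ClassConst s (Step P μ) := by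
  have key : ∀ y : Ω, Step P μ y = ∑ D : Quotient s, μ D.out * Pushforward s (P y) D := by
    intro y
    unfold Step
    rw [← Finset.sum_fiberwise Finset.univ (fun x => Quotient.mk s x)
      (fun x => μ x * P x y)]
    refine Finset.sum_congr rfl fun D _ => ?_
    have h1 : ∑ x ∈ Finset.univ.filter (fun x => Quotient.mk s x = D), μ x * P x y
        = ∑ x ∈ Finset.univ.filter (fun x => Quotient.mk s x = D), μ D.out * P y x :=
      Finset.sum_congr rfl fun x hx => by
        rw [hμ x D.out (mem_fiber_out s hx), hsym x y]
    rw [h1, ← Finset.mul_sum]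
    rfl
  intro y y' hyy'
  rw [key y, key y']
  refine Finset.sum_congr rfl fun D _ => ?_
  rw [hlump y y' (Quotient.exact hyy') D]

lemma classUniform_classConst (x : Ω) : ClassConst s (classUniform s x) := by
  intro y y' h
  unfold classUniform
  rw [h]

lemma uniformDist_classConst : ClassConst s (uniformDist Ω) := fun _ _ _ => rfl

lemma pushforward_classUniform (x : Ω) :
    Pushforward s (classUniform s x) = onePoint (Quotient.mk s x) := by
  funext C
  unfold Pushforward classUniform onePoint
  by_cases hC : C = Quotient.mk s x
  · subst hC
    rw [if_pos rfl]
    have h1 : (∑ z ∈ Finset.univ.filter (fun z => Quotient.mk s z = Quotient.mk s x),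
          if Quotient.mk s z = Quotient.mk s x then 1 / (classCard s x : ℝ) else 0)
        = ∑ _z ∈ Finset.univ.filter (fun z => Quotient.mk s z = Quotient.mk s x),
          1 / (classCard s x : ℝ) :=
      Finset.sum_congr rfl fun z hz => by
        rw [Finset.mem_filter] at hz
        rw [if_pos hz.2]
    rw [h1, Finset.sum_const, nsmul_eq_mul]
    have hcard : ((classCard s x : ℕ) : ℝ) ≠ 0 := by
      have hx : x ∈ Finset.univ.filter (fun z => Quotient.mk s z = Quotient.mk s x) := by
        simp
      have : 0 < classCard s x := Finset.card_pos.mpr ⟨x, hx⟩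
      exact_mod_cast this.ne'
    show ((classCard s x : ℕ) : ℝ) * (1 / (classCard s x : ℝ)) = 1
    field_simp
  · rw [if_neg hC]
    have h1 : (∑ z ∈ Finset.univ.filter (fun z => Quotient.mk s z = C),
          if Quotient.mk s z = Quotient.mk s x then 1 / (classCard s x : ℝ) else 0)
        = ∑ _z ∈ Finset.univ.filter (fun z => Quotient.mk s z = C), (0 : ℝ) :=
      Finset.sum_congr rfl fun z hz => by
        rw [Finset.mem_filter] at hz
        rw [if_neg (by rw [hz.2]; exact hC)]
    rw [h1, Finset.sum_const_zero]

lemma step_iterate_classConst (hsym : ∀ x y, P x y = P y x) (hlump : IsLumpable s P)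
    (μ : Ω → ℝ) (hμ : ClassConst s μ) (t : ℕ) : ClassConst s ((Step P)^[t] μ) := by
  induction t with
  | zero => exact hμ
  | succ n ih =>
    rw [Function.iterate_succ_apply']
    exact step_classConst s P hsym hlump _ ih

lemma pushforward_step_iterate (hlump : IsLumpable s P)
    (μ : Ω → ℝ) (t : ℕ) :
    Pushforward s ((Step P)^[t] μ) = (Step (Proj s P))^[t] (Pushforward s μ) := by
  induction t with
  | zero => rfl
  | succ n ih =>
    rw [Function.iterate_succ_apply', Function.iterate_succ_apply', ← ih]
    funext C
    exact pushforward_step s P hlump _ C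

end Aux

/-- the mixing time of the chain started from the uniform distribution on
an equivalence class equals the mixing time of the projected chain: `τ̂(ε) = τ̄(ε)`. -/
theorem mixing_time_classUniform_eq_proj
    [Fintype Ω] [Nonempty Ω] (s : Setoid Ω) [DecidableEq (Quotient s)]
    [Fintype (Quotient s)]
    (P : Ω → Ω → ℝ)
    (hP0 : ∀ x y, 0 ≤ P x y) (hP1 : ∀ x, ∑ y, P x y = 1)
    (hsym : ∀ x y, P x y = P y x)
    (hlump : IsLumpable s P)
    (ε : ℝ) (hε : 0 < ε) (T : ℕ) :
    (∀ (x : Ω) (t : ℕ), T < t →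
        dV ((Step P)^[t] (classUniform s x)) (uniformDist Ω) ≤ ε) ↔
    (∀ (C : Quotient s) (t : ℕ), T < t →
        dV ((Step (Proj s P))^[t] (onePoint C)) (Pushforward s (uniformDist Ω)) ≤ ε) := by
  have key : ∀ (x : Ω) (t : ℕ),
      dV ((Step (Proj s P))^[t] (onePoint (Quotient.mk s x))) (Pushforward s (uniformDist Ω))
        = dV ((Step P)^[t] (classUniform s x)) (uniformDist Ω) := by
    intro x t
    rw [← pushforward_classUniform s x, ← pushforward_step_iterate s P hlump]
    exact dV_pushforward s _ _
      (step_iterate_classConst s P hsym hlump _ (classUniform_classConst s x) t)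
      (uniformDist_classConst s)
  constructor
  · intro h C t ht
    have hx : Quotient.mk s C.out = C := Quotient.out_eq C
    rw [← hx, key C.out t]
    exact h C.out t ht
  · intro h x t ht
    rw [← key x t]
    exact h (Quotient.mk s x) t ht
end
end
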